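/- For the graph G(t,s) with s + t − 1 ≥ k (positive integers s, t, k), the independent K_k-isolation number satisfies ι'_k(G(t,s)) = s(t − 1) + 1. -/

import Mathlib

open SimpleGraph

variable {V : Type*}

/-- The closed neighborhood `N[S]` of a set of vertices. -/
def closedNbhd (G : SimpleGraph V) (S : Set V) : Set V :=
  {v | v ∈ S ∨ ∃ u ∈ S, G.Adj u v}

/-- The open neighborhood `N(S)` of a set of vertices. -/
def openNbhd (G : SimpleGraph V) (S : Set V) : Set V :=
  {v | ∃ u ∈ S, G.Adj u v}

/-- A set is independent if no two of its vertices are adjacent. -/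
def IsIndep (G : SimpleGraph V) (S : Set V) : Prop :=
  S.Pairwise fun u w => ¬ G.Adj u w

/-- `S` is `K_k`-isolating: `G - N[S]` contains no clique of size `k`. -/
def IsIsolating (G : SimpleGraph V) (k : ℕ) (S : Set V) : Prop :=
  ∀ T : Finset V, (↑T : Set V) ∩ closedNbhd G S = ∅ → G.IsClique ↑T → T.card ≠ k

/-- The `K_k`-isolation number `ι_k(G)`. -/
noncomputable def iota [Fintype V] (G : SimpleGraph V) (k : ℕ) : ℕ :=
  sInf {n | ∃ S : Finset V, S.card = n ∧ IsIsolating G k ↑S}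

/-- The independent `K_k`-isolation number `ι'_k(G)`. -/
noncomputable def iota' [Fintype V] (G : SimpleGraph V) (k : ℕ) : ℕ :=
  sInf {n | ∃ S : Finset V, S.card = n ∧ IsIsolating G k ↑S ∧ IsIndep G ↑S}

/-- A dominating set: every vertex lies in `N[S]`. -/
def IsDominating (G : SimpleGraph V) (S : Set V) : Prop :=
  ∀ v, v ∈ closedNbhd G S

/-- The domination number `γ(G)`. -/
noncomputable def gammaNum [Fintype V] (G : SimpleGraph V) : ℕ :=
  sInf {n | ∃ S : Finset V, S.card = n ∧ IsDominating G ↑S}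

/-- The independent domination number `i(G)`. -/
noncomputable def iNum [Fintype V] (G : SimpleGraph V) : ℕ :=
  sInf {n | ∃ S : Finset V, S.card = n ∧ IsDominating G ↑S ∧ IsIndep G ↑S}

/-- `G` is `K_{1,r}`-free: no induced subgraph isomorphic to the star `K_{1,r}`. -/
def K1rFree (G : SimpleGraph V) (r : ℕ) : Prop :=
  IsEmpty (completeBipartiteGraph (Fin 1) (Fin r) ↪g G)

/-- Degree of `v` inside the vertex subset `T`. -/
def degIn [DecidableEq V] (G : SimpleGraph V) [DecidableRel G.Adj] (T : Finset V) (v : V) : ℕ :=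
  (T.filter (G.Adj v)).card

/-- Vertices of `G(t,s)`: `inl i` is the clique vertex `xᵢ`; `inr (i, i', j)` is the `j`-th
vertex of the copy `K^{i,i'}_k`, with `y_{i,i'}` being the one with `j = 0`. -/
abbrev GtsVertex (t s k : ℕ) := Fin t ⊕ Fin t × Fin s × Fin k

/-- The graph `G(t,s)`: a clique on `x₁,…,x_t` and `s·t` disjoint copies of `K_k`, with
`xᵢ` joined to the vertex `y_{i,i'}` (index `0`) of each copy `K^{i,i'}_k`. -/
def GraphGts (t s k : ℕ) : SimpleGraph (GtsVertex t s k) where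
  Adj a b := match a, b with
    | Sum.inl i, Sum.inl j => i ≠ j
    | Sum.inl i, Sum.inr (a, _, c) => a = i ∧ (c : ℕ) = 0
    | Sum.inr (a, _, c), Sum.inl i => a = i ∧ (c : ℕ) = 0
    | Sum.inr (a, b, c), Sum.inr (a', b', c') => a = a' ∧ b = b' ∧ c ≠ c'
  symm := by
    constructor
    rintro (i | ⟨a, b, c⟩) (j | ⟨a', b', c'⟩) h
    · exact h.symm
    · exact h
    · exact h
    · exact ⟨h.1.symm, h.2.1.symm, h.2.2.symm⟩
  loopless := by
    constructor
    rintro (i | ⟨a, b, c⟩) h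
    · exact h rfl
    · exact h.2.2 rfl

instance (t s k : ℕ) : DecidableRel (GraphGts t s k).Adj := fun a b =>
  match a, b with
  | Sum.inl i, Sum.inl j => inferInstanceAs (Decidable (i ≠ j))
  | Sum.inl i, Sum.inr (a, _, c) => inferInstanceAs (Decidable (a = i ∧ (c : ℕ) = 0))
  | Sum.inr (a, _, c), Sum.inl i => inferInstanceAs (Decidable (a = i ∧ (c : ℕ) = 0))
  | Sum.inr (a, b, c), Sum.inr (a', b', c') =>
      inferInstanceAs (Decidable (a = a' ∧ b = b' ∧ c ≠ c'))

lemma gts_copy_hit {t s k : ℕ} (hk : 0 < k) (S : Finset (GtsVertex t s k))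
    (hiso : IsIsolating (GraphGts t s k) k ↑S) (i : Fin t) (i' : Fin s)
    (hx : (Sum.inl i : GtsVertex t s k) ∉ S) :
    ∃ c : Fin k, (Sum.inr (i, i', c) : GtsVertex t s k) ∈ S := by
  classical
  set T : Finset (GtsVertex t s k) :=
    Finset.univ.image (fun c : Fin k => (Sum.inr (i, i', c) : GtsVertex t s k)) with hT
  have hinj : Function.Injective (fun c : Fin k => (Sum.inr (i, i', c) : GtsVertex t s k)) := by
    intro a b hab
    simpa using hab
  have hcard : T.card = k := by
    rw [hT, Finset.card_image_of_injective _ hinj, Finset.card_univ, Fintype.card_fin]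
  have hclique : (GraphGts t s k).IsClique ↑T := by
    intro a ha b hb hab
    rw [Finset.mem_coe, hT, Finset.mem_image] at ha hb
    obtain ⟨c, -, rfl⟩ := ha
    obtain ⟨c', -, rfl⟩ := hb
    exact ⟨rfl, rfl, fun hcc => hab (by rw [hcc])⟩
  have hne : ¬ ((↑T : Set (GtsVertex t s k)) ∩ closedNbhd (GraphGts t s k) ↑S = ∅) :=
    fun hemp => hiso T hemp hclique hcard
  rw [← Set.not_nonempty_iff_eq_empty, not_not] at hne
  obtain ⟨v, hvT, hvN⟩ := hne
  rw [Finset.mem_coe, hT, Finset.mem_image] at hvT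
  obtain ⟨c, -, rfl⟩ := hvT
  rcases hvN with hvS | ⟨u, huS, hadj⟩
  · exact ⟨c, hvS⟩
  · rcases u with j | ⟨a, b, c'⟩
    · obtain ⟨h1, -⟩ := hadj
      exact absurd (h1 ▸ huS) hx
    · obtain ⟨rfl, rfl, -⟩ := hadj
      exact ⟨c', huS⟩

/-- ι'_k(G(t,s)) = s(t − 1) + 1. -/
theorem stmt_13 (t s k : ℕ) (ht : 0 < t) (hs : 0 < s) (hk : 0 < k)
    (h : s + t - 1 ≥ k) :
    iota' (GraphGts t s k) k = s * (t - 1) + 1 := by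
  classical
  set i0 : Fin t := ⟨0, ht⟩ with hi0
  set Y : Finset (GtsVertex t s k) :=
    ((Finset.univ.erase i0) ×ˢ (Finset.univ : Finset (Fin s))).image
      (fun p => (Sum.inr (p.1, p.2, ⟨0, hk⟩) : GtsVertex t s k)) with hY
  set S0 : Finset (GtsVertex t s k) := insert (Sum.inl i0) Y with hS0
  have hmemY : ∀ v, v ∈ Y ↔ ∃ (a : Fin t) (b : Fin s), a ≠ i0 ∧
      v = Sum.inr (a, b, (⟨0, hk⟩ : Fin k)) := by
    intro v
    simp only [hY, Finset.mem_image, Finset.mem_product, Finset.mem_erase, Finset.mem_univ,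
      and_true, true_and]
    constructor
    · rintro ⟨⟨a, b⟩, ha, rfl⟩
      exact ⟨a, b, ha, rfl⟩
    · rintro ⟨a, b, ha, rfl⟩
      exact ⟨⟨a, b⟩, ha, rfl⟩
  have hYcard : Y.card = (t - 1) * s := by
    rw [hY, Finset.card_image_of_injective, Finset.card_product, Finset.card_erase_of_mem
      (Finset.mem_univ _), Finset.card_univ, Finset.card_univ, Fintype.card_fin, Fintype.card_fin]
    intro p q hpq
    simp only [Sum.inr.injEq, Prod.mk.injEq] at hpq
    exact Prod.ext hpq.1 hpq.2.1
  have hS0card : S0.card = s * (t - 1) + 1 := by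
    rw [hS0, Finset.card_insert_of_notMem, hYcard, Nat.mul_comm]
    intro hmem
    obtain ⟨a, b, -, hab⟩ := (hmemY _).1 hmem
    exact Sum.inl_ne_inr hab
  have hmemS0 : ∀ v, v ∈ S0 ↔ v = Sum.inl i0 ∨ ∃ (a : Fin t) (b : Fin s), a ≠ i0 ∧
      v = Sum.inr (a, b, (⟨0, hk⟩ : Fin k)) := by
    intro v
    rw [hS0, Finset.mem_insert, hmemY]
  -- independence of S0
  have hindep0 : IsIndep (GraphGts t s k) ↑S0 := by
    intro u hu w hw hne hadj
    rw [Finset.mem_coe, hmemS0] at hu hw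
    rcases hu with rfl | ⟨a, b, ha, rfl⟩ <;> rcases hw with rfl | ⟨a', b', ha', rfl⟩
    · exact hne rfl
    · exact ha' hadj.1
    · exact ha hadj.1
    · exact hadj.2.2 rfl
  -- isolation of S0
  have hiso0 : IsIsolating (GraphGts t s k) k ↑S0 := by
    intro T hemp hclique hcard
    have hnot : ∀ v ∈ T, v ∉ closedNbhd (GraphGts t s k) ↑S0 := by
      intro v hv hvN
      exact Set.eq_empty_iff_forall_notMem.1 hemp v ⟨hv, hvN⟩
    have hform : ∀ v ∈ T, ∃ (b : Fin s) (c : Fin k), c ≠ ⟨0, hk⟩ ∧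
        v = Sum.inr (i0, b, c) := by
      intro v hv
      have hnv := hnot v hv
      have hS0mem : (Sum.inl i0 : GtsVertex t s k) ∈ S0 := by
        rw [hmemS0]; exact Or.inl rfl
      rcases v with j | ⟨a, b, c⟩
      · by_cases hj : j = i0
        · exact absurd (Or.inl (by rw [Finset.mem_coe, hj]; exact hS0mem)) hnv
        · exact absurd (Or.inr ⟨Sum.inl i0, hS0mem, fun he => hj he.symm⟩) hnv
      · by_cases hai : a = i0
        · by_cases hc : c = ⟨0, hk⟩
          · exact absurd (Or.inr ⟨Sum.inl i0, hS0mem, hai, by rw [hc]⟩) hnv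
          · exact ⟨b, c, hc, by rw [hai]⟩
        · by_cases hc : c = ⟨0, hk⟩
          · have : (Sum.inr (a, b, c) : GtsVertex t s k) ∈ S0 := by
              rw [hmemS0]; exact Or.inr ⟨a, b, hai, by rw [hc]⟩
            exact absurd (Or.inl this) hnv
          · have hy : (Sum.inr (a, b, (⟨0, hk⟩ : Fin k)) : GtsVertex t s k) ∈ S0 := by
              rw [hmemS0]; exact Or.inr ⟨a, b, hai, rfl⟩
            exact absurd (Or.inr ⟨_, hy, rfl, rfl, fun he => hc he.symm⟩) hnv
    -- extract the Fin k index
    set e : GtsVertex t s k → Fin k := fun v => match v with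
      | Sum.inl _ => ⟨0, hk⟩
      | Sum.inr (_, _, c) => c with he
    have hinjOn : Set.InjOn e ↑T := by
      intro v hv w hw hvw
      obtain ⟨b, c, -, rfl⟩ := hform v (Finset.mem_coe.1 hv)
      obtain ⟨b', c', -, rfl⟩ := hform w (Finset.mem_coe.1 hw)
      by_contra hne
      have hadj := hclique hv hw hne
      exact hadj.2.2 hvw
    have hsub : T.image e ⊆ Finset.univ.erase ⟨0, hk⟩ := by
      intro c hc
      rw [Finset.mem_image] at hc
      obtain ⟨v, hv, rfl⟩ := hc
      obtain ⟨b, c', hc', rfl⟩ := hform v hv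
      exact Finset.mem_erase.2 ⟨hc', Finset.mem_univ _⟩
    have h1 : T.card ≤ k - 1 := by
      calc T.card = (T.image e).card := (Finset.card_image_of_injOn hinjOn).symm
        _ ≤ (Finset.univ.erase (⟨0, hk⟩ : Fin k)).card := Finset.card_le_card hsub
        _ = k - 1 := by
          rw [Finset.card_erase_of_mem (Finset.mem_univ _), Finset.card_univ, Fintype.card_fin]
    omega
  -- lower bound
  have hlb : ∀ n ∈ {n | ∃ S : Finset (GtsVertex t s k), S.card = n ∧
      IsIsolating (GraphGts t s k) k ↑S ∧ IsIndep (GraphGts t s k) ↑S},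
      s * (t - 1) + 1 ≤ n := by
    rintro n ⟨S, rfl, hiso, hindep⟩
    by_cases hex : ∃ j : Fin t, (Sum.inl j : GtsVertex t s k) ∈ S
    · obtain ⟨j0, hj0⟩ := hex
      have hB : ∀ p : Fin t × Fin s, ∃ c : Fin k,
          (p.1 ≠ j0 → (Sum.inr (p.1, p.2, c) : GtsVertex t s k) ∈ S) := by
        intro p
        by_cases hp : p.1 = j0
        · exact ⟨⟨0, hk⟩, fun hcon => absurd hp hcon⟩
        · have hnx : (Sum.inl p.1 : GtsVertex t s k) ∉ S := by
            intro hmem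
            exact hindep (Finset.mem_coe.2 hmem) (Finset.mem_coe.2 hj0)
              (fun he => hp (Sum.inl.inj he)) hp
          obtain ⟨c, hc⟩ := gts_copy_hit hk S hiso p.1 p.2 hnx
          exact ⟨c, fun _ => hc⟩
      choose f hf using hB
      have hinj : Set.InjOn (fun p : Fin t × Fin s => (Sum.inr (p.1, p.2, f p) : GtsVertex t s k))
          ↑((Finset.univ.erase j0) ×ˢ (Finset.univ : Finset (Fin s))) := by
        intro p hp q hq hpq
        simp only [Sum.inr.injEq, Prod.mk.injEq] at hpq
        exact Prod.ext hpq.1 hpq.2.1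
      have hmap : ∀ p ∈ (Finset.univ.erase j0) ×ˢ (Finset.univ : Finset (Fin s)),
          (Sum.inr (p.1, p.2, f p) : GtsVertex t s k) ∈ S.erase (Sum.inl j0) := by
        intro p hp
        rw [Finset.mem_product, Finset.mem_erase] at hp
        exact Finset.mem_erase.2 ⟨Sum.inr_ne_inl, hf p hp.1.1⟩
      have hcard1 : ((Finset.univ.erase j0) ×ˢ (Finset.univ : Finset (Fin s))).card ≤
          (S.erase (Sum.inl j0)).card := Finset.card_le_card_of_injOn _ hmap hinj
      rw [Finset.card_product, Finset.card_erase_of_mem (Finset.mem_univ _), Finset.card_univ,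
        Finset.card_univ, Fintype.card_fin, Fintype.card_fin,
        Finset.card_erase_of_mem hj0] at hcard1
      have hpos : 1 ≤ S.card := Finset.card_pos.2 ⟨_, hj0⟩
      have : s * (t - 1) = (t - 1) * s := Nat.mul_comm _ _
      omega
    · push_neg at hex
      have hA : ∀ p : Fin t × Fin s, ∃ c : Fin k,
          (Sum.inr (p.1, p.2, c) : GtsVertex t s k) ∈ S :=
        fun p => gts_copy_hit hk S hiso p.1 p.2 (hex p.1)
      choose f hf using hA
      have hinj : Set.InjOn (fun p : Fin t × Fin s => (Sum.inr (p.1, p.2, f p) : GtsVertex t s k))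
          ↑(Finset.univ : Finset (Fin t × Fin s)) := by
        intro p hp q hq hpq
        simp only [Sum.inr.injEq, Prod.mk.injEq] at hpq
        exact Prod.ext hpq.1 hpq.2.1
      have hcard1 : (Finset.univ : Finset (Fin t × Fin s)).card ≤ S.card :=
        Finset.card_le_card_of_injOn _ (fun p _ => hf p) hinj
      rw [Finset.card_univ, Fintype.card_prod, Fintype.card_fin, Fintype.card_fin] at hcard1
      have h2 : t - 1 + 1 = t := Nat.succ_pred_eq_of_pos ht
      have h3 : t * s = (t - 1) * s + s := by
        calc t * s = (t - 1 + 1) * s := by rw [h2]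
          _ = (t - 1) * s + s := Nat.succ_mul _ _
      have h4 : s * (t - 1) = (t - 1) * s := Nat.mul_comm _ _
      omega
  have hub : s * (t - 1) + 1 ∈ {n | ∃ S : Finset (GtsVertex t s k), S.card = n ∧
      IsIsolating (GraphGts t s k) k ↑S ∧ IsIndep (GraphGts t s k) ↑S} :=
    ⟨S0, hS0card, hiso0, hindep0⟩
  exact le_antisymm (Nat.sInf_le hub) (le_csInf ⟨_, hub⟩ hlb)
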